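/- For every n ≥ 1, the sum over all Dyck paths α of length 2n of the product of the heights of the down steps of α equals 1·3·5···(2n-1), the product of the first n odd numbers. -/

import Mathlib

open Finset

/-- `D ⊆ {1,…,L}` is the set of down steps of a Dyck path of length `L`:
it has `L/2` elements and every prefix has at least as many up steps as down steps. -/
def IsDyck (L : ℕ) (D : Finset ℕ) : Prop :=
  D ⊆ Finset.Icc 1 L ∧ 2 * D.card = L ∧ ∀ k ≤ L, 2 * (D.filter (· ≤ k)).card ≤ k

instance (L : ℕ) : DecidablePred (IsDyck L) := fun D => by
  unfold IsDyck; infer_instance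

/-- The collection of all Dyck paths (encoded by their down-step sets) of length `L`. -/
def dyckPaths (L : ℕ) : Finset (Finset ℕ) :=
  (Finset.Icc 1 L).powerset.filter (IsDyck L)

/-- The position (in `{1,…,L}`) of the `i`-th down step (`1`-indexed). -/
def dstep (D : Finset ℕ) (i : ℕ) : ℕ := (D.sort (· ≤ ·)).getD (i - 1) 0

/-- The height `h_i` of the `i`-th down step of a Dyck path:  the step goes from
`(d_i - 1, h_i)` to `(d_i, h_i - 1)`; equivalently `h_i = d_i + 1 - 2 i`. -/
def ht (D : Finset ℕ) (i : ℕ) : ℕ := dstep D i + 1 - 2 * i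

/-- The modified height `h_i^*`: equal to `h_i - 1` if there is no up step to the right of
the `i`-th down step, and to `h_i` otherwise. -/
def hstar (L : ℕ) (D : Finset ℕ) (i : ℕ) : ℕ :=
  if Finset.Ioc (dstep D i) L ⊆ D then ht D i - 1 else ht D i

/-- `crossout w k` is the pair (positions marked A, positions marked B) after `k` rounds of
the crossout procedure: in each round, first mark B at the unmarked position with the smallest
value `w i`, then mark A at the leftmost unmarked position. -/
def crossout {N : ℕ} (w : Equiv.Perm (Fin N)) : ℕ → Finset (Fin N) × Finset (Fin N)
  | 0 => (∅, ∅)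
  | k + 1 =>
    let p := crossout w k
    let u := (Finset.univ : Finset (Fin N)) \ (p.1 ∪ p.2)
    if hu : u.Nonempty then
      let b := w.symm ((u.image w).min' (hu.image _))
      if ha : (u.erase b).Nonempty then
        (insert ((u.erase b).min' ha) p.1, insert b p.2)
      else (p.1, insert b p.2)
    else p

/-- The set of positions marked A under the crossout procedure. -/
def markA {N : ℕ} (w : Equiv.Perm (Fin N)) : Finset (Fin N) := (crossout w N).1

/-- The set of positions marked B under the crossout procedure. -/
def markB {N : ℕ} (w : Equiv.Perm (Fin N)) : Finset (Fin N) := (crossout w N).2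

/-- Down-step set of Alice's path `p_A(w)`:  the values (in `{1,…,N}`) at positions marked A. -/
def pAset {N : ℕ} (w : Equiv.Perm (Fin N)) : Finset ℕ :=
  (markA w).image (fun a => Fin.val (w a) + 1)

/-- Down-step set of Bob's path `p_B(w)`:  `{b + 1 : b marked B} ∪ {N + 2}`
(positions taken in `{1,…,N}`, so `b + 1` becomes `(b : ℕ) + 2`). -/
def pBset {N : ℕ} (w : Equiv.Perm (Fin N)) : Finset ℕ :=
  insert (N + 2) ((markB w).image (fun b => Fin.val b + 2))

/-- Number of AA inversions of `w`. -/
def aaInv {N : ℕ} (w : Equiv.Perm (Fin N)) : ℕ :=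
  (Finset.univ.filter (fun p : Fin N × Fin N =>
    p.1 < p.2 ∧ w p.2 < w p.1 ∧ p.1 ∈ markA w ∧ p.2 ∈ markA w)).card

/-- Number of BB inversions of `w`. -/
def bbInv {N : ℕ} (w : Equiv.Perm (Fin N)) : ℕ :=
  (Finset.univ.filter (fun p : Fin N × Fin N =>
    p.1 < p.2 ∧ w p.2 < w p.1 ∧ p.1 ∈ markB w ∧ p.2 ∈ markB w)).card

/-- Number of AB inversions of `w`. -/
def abInv {N : ℕ} (w : Equiv.Perm (Fin N)) : ℕ :=
  (Finset.univ.filter (fun p : Fin N × Fin N =>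
    p.1 < p.2 ∧ w p.2 < w p.1 ∧ p.1 ∈ markA w ∧ p.2 ∈ markB w)).card

/-- Total number of inversions of `w`. -/
def invW {N : ℕ} (w : Equiv.Perm (Fin N)) : ℕ :=
  (Finset.univ.filter (fun p : Fin N × Fin N => p.1 < p.2 ∧ w p.2 < w p.1)).card

/-- The statistic `z(w) = #{i < j : w i < w j and i is marked B}`. -/
def zstat {N : ℕ} (w : Equiv.Perm (Fin N)) : ℕ :=
  (Finset.univ.filter (fun p : Fin N × Fin N =>
    p.1 < p.2 ∧ w p.1 < w p.2 ∧ p.1 ∈ markB w)).card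

/-- Label carried by the down step of `p_A` corresponding to the A-position `a`:
one plus the number of A-positions to the left of `a` with larger value. -/
def labelA {N : ℕ} (w : Equiv.Perm (Fin N)) (a : Fin N) : ℕ :=
  1 + ((markA w).filter (fun a' => a' < a ∧ w a < w a')).card

/-- The label sequence `ℓ` of `p_A(w)`: `ellSeq w r` is the label on the `r`-th down step. -/
def ellSeq {N : ℕ} (w : Equiv.Perm (Fin N)) (r : ℕ) : ℕ :=
  ∑ a ∈ (markA w).filter (fun a => Fin.val (w a) + 1 = dstep (pAset w) r), labelA w a

/-- Label carried by the down step of `p_B` corresponding to the B-position `b`: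
one plus the number of B-positions to the right of `b` with smaller value. -/
def labelB {N : ℕ} (w : Equiv.Perm (Fin N)) (b : Fin N) : ℕ :=
  1 + ((markB w).filter (fun b' => w b' < w b ∧ b < b')).card

/-- The label sequence `m` of `p_B(w)`: `emSeq w r` is the label on the `r`-th down step. -/
def emSeq {N : ℕ} (w : Equiv.Perm (Fin N)) (r : ℕ) : ℕ :=
  ∑ b ∈ (markB w).filter (fun b => Fin.val b + 2 = dstep (pBset w) r), labelB w b

/-- The `q`-integer `[k]_q = 1 + q + ⋯ + q^{k-1}` in `ℤ[q]`. -/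
noncomputable def qint (k : ℕ) : Polynomial ℤ := ∑ j ∈ Finset.range k, Polynomial.X ^ j

/-- The `q`-integer `[k]` in the variable `X v` of the two-variable polynomial ring. -/
noncomputable def qint2 (v : Fin 2) (k : ℕ) : MvPolynomial (Fin 2) ℤ :=
  ∑ j ∈ Finset.range k, (MvPolynomial.X v) ^ j

/-- `M` is a perfect matching of `{1,…,2n}`: a family of pairwise disjoint 2-element sets
whose union is `{1,…,2n}`. -/
def IsMatching (n : ℕ) (M : Finset (Finset ℕ)) : Prop :=
  (∀ e ∈ M, e.card = 2) ∧ (M : Set (Finset ℕ)).PairwiseDisjoint id ∧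
    M.biUnion id = Finset.Icc 1 (2 * n)

section AuxStmt1

open Nat

lemma sort_insert_max {s : Finset ℕ} {a : ℕ} (ha : ∀ b ∈ s, b < a) (has : a ∉ s) :
    (insert a s).sort (· ≤ ·) = s.sort (· ≤ ·) ++ [a] := by
  refine (fun hp hs1 hs2 => List.Perm.eq_of_pairwise' (r := (· ≤ ·)) hs1 hs2 hp) ?_ (Finset.pairwise_sort _ _) ?_
  · rw [← Multiset.coe_eq_coe]
    have h2 : ((s.sort (· ≤ ·) ++ [a] : List ℕ) : Multiset ℕ)
        = (s.sort (· ≤ ·) : Multiset ℕ) + ({a} : Multiset ℕ) := by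
      rfl
    rw [Finset.sort_eq, h2, Finset.sort_eq, Finset.insert_val_of_notMem has]
    rw [add_comm, Multiset.singleton_add]
  · rw [List.pairwise_append]
    refine ⟨Finset.pairwise_sort _ _, List.pairwise_singleton _ _, ?_⟩
    intro x hx b hb
    simp only [List.mem_singleton] at hb
    subst hb
    exact (ha x ((Finset.mem_sort _).mp hx)).le

/-- Generalized paths of length `k` ending at height `m`. -/
def gpaths (k m : ℕ) : Finset (Finset ℕ) :=
  (Finset.Icc 1 k).powerset.filter
    (fun D => 2 * D.card + m = k ∧ ∀ j ≤ k, 2 * (D.filter (· ≤ j)).card ≤ j)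

lemma mem_gpaths {k m : ℕ} {D : Finset ℕ} :
    D ∈ gpaths k m ↔ D ⊆ Finset.Icc 1 k ∧ 2 * D.card + m = k ∧
      ∀ j ≤ k, 2 * (D.filter (· ≤ j)).card ≤ j := by
  simp [gpaths, Finset.mem_filter, Finset.mem_powerset, and_assoc]

/-- Weight of a path: product of heights of down steps. -/
def wt (D : Finset ℕ) : ℕ := ∏ i ∈ Finset.Icc 1 D.card, ht D i

/-- Transfer recursion. -/
def W : ℕ → ℕ → ℕ
  | 0, 0 => 1
  | 0, _ + 1 => 0
  | k + 1, 0 => W k 1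
  | k + 1, m + 1 => W k m + (m + 2) * W k (m + 2)

lemma gpaths_mem_le {k m : ℕ} {D : Finset ℕ} (hD : D ∈ gpaths k m) :
    ∀ x ∈ D, 1 ≤ x ∧ x ≤ k := by
  intro x hx
  have := (mem_gpaths.mp hD).1 hx
  simpa [Finset.mem_Icc] using this

lemma gpaths_filter_not_mem (k m : ℕ) :
    (gpaths (k + 1) (m + 1)).filter (fun D => k + 1 ∉ D) = gpaths k m := by
  ext D
  simp only [Finset.mem_filter, mem_gpaths]
  constructor
  · rintro ⟨⟨hsub, hcard, hpre⟩, hnot⟩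
    refine ⟨?_, by omega, fun j hj => hpre j (by omega)⟩
    intro x hx
    have h1 := hsub hx
    simp only [Finset.mem_Icc] at h1 ⊢
    refine ⟨h1.1, ?_⟩
    rcases Nat.lt_or_ge x (k + 1) with h | h
    · omega
    · exfalso
      have : x = k + 1 := by omega
      exact hnot (this ▸ hx)
  · rintro ⟨hsub, hcard, hpre⟩
    have hk1 : k + 1 ∉ D := by
      intro h
      have := hsub h
      simp only [Finset.mem_Icc] at this
      omega
    refine ⟨⟨hsub.trans (Finset.Icc_subset_Icc_right (by omega)), by omega, ?_⟩, hk1⟩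
    intro j hj
    rcases Nat.lt_or_ge j (k + 1) with h | h
    · exact hpre j (by omega)
    · have hfil : 2 * (D.filter (· ≤ j)).card ≤ 2 * D.card := by
        have := Finset.card_le_card (Finset.filter_subset (· ≤ j) D)
        omega
      omega

lemma gpaths_zero_filter_not_mem (k : ℕ) :
    (gpaths (k + 1) 0).filter (fun D => k + 1 ∉ D) = ∅ := by
  rw [Finset.eq_empty_iff_forall_notMem]
  intro D hD
  rw [Finset.mem_filter, mem_gpaths] at hD
  obtain ⟨⟨hsub, hcard, hpre⟩, hnot⟩ := hD
  have hfil : D.filter (· ≤ k) = D := by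
    apply Finset.filter_true_of_mem
    intro x hx
    have := hsub hx
    simp only [Finset.mem_Icc] at this
    rcases Nat.lt_or_ge x (k + 1) with h | h
    · omega
    · exfalso
      have : x = k + 1 := by omega
      exact hnot (this ▸ hx)
  have := hpre k (by omega)
  rw [hfil] at this
  omega

lemma gpaths_filter_mem (k m : ℕ) :
    (gpaths (k + 1) m).filter (fun D => k + 1 ∈ D) =
      (gpaths k (m + 1)).image (insert (k + 1)) := by
  ext D
  simp only [Finset.mem_filter, Finset.mem_image]
  constructor
  · rintro ⟨hD, hmem⟩
    refine ⟨D.erase (k + 1), ?_, Finset.insert_erase hmem⟩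
    rw [mem_gpaths] at hD ⊢
    obtain ⟨hsub, hcard, hpre⟩ := hD
    have hc1 : 1 ≤ D.card := Finset.card_pos.mpr ⟨k + 1, hmem⟩
    refine ⟨?_, ?_, ?_⟩
    · intro x hx
      rw [Finset.mem_erase] at hx
      have := hsub hx.2
      simp only [Finset.mem_Icc] at this ⊢
      have := hx.1
      omega
    · rw [Finset.card_erase_of_mem hmem]
      omega
    · intro j hj
      have hfe : (D.erase (k + 1)).filter (· ≤ j) = D.filter (· ≤ j) := by
        ext x
        simp only [Finset.mem_filter, Finset.mem_erase]
        constructor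
        · rintro ⟨⟨_, hxD⟩, hxj⟩; exact ⟨hxD, hxj⟩
        · rintro ⟨hxD, hxj⟩
          exact ⟨⟨by omega, hxD⟩, hxj⟩
      rw [hfe]
      exact hpre j (by omega)
  · rintro ⟨D', hD', rfl⟩
    rw [mem_gpaths] at hD'
    obtain ⟨hsub, hcard, hpre⟩ := hD'
    have hle : ∀ x ∈ D', x ≤ k := by
      intro x hx
      have := hsub hx
      simp only [Finset.mem_Icc] at this
      omega
    have hk1 : k + 1 ∉ D' := fun h => by have := hle _ h; omega
    have hcard' : (insert (k + 1) D').card = D'.card + 1 :=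
      Finset.card_insert_of_notMem hk1
    refine ⟨mem_gpaths.mpr ⟨?_, ?_, ?_⟩, Finset.mem_insert_self _ _⟩
    · intro x hx
      rcases Finset.mem_insert.mp hx with h | h
      · simp [Finset.mem_Icc, h]
      · have := hsub h
        simp only [Finset.mem_Icc] at this ⊢
        omega
    · omega
    · intro j hj
      rw [Finset.filter_insert]
      rcases Nat.lt_or_ge j (k + 1) with h | h
      · rw [if_neg (by simpa using by omega : ¬ (k + 1 ≤ j))]
        exact hpre j (by omega)
      · have hjeq : j = k + 1 := by omega
        subst hjeq
        rw [if_pos (by simp)]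
        have hfil : D'.filter (· ≤ k + 1) = D' := by
          apply Finset.filter_true_of_mem
          intro x hx
          have := hle x hx
          simpa using by omega
        rw [hfil, Finset.card_insert_of_notMem hk1]
        omega

lemma wt_insert {k m : ℕ} {D : Finset ℕ} (hD : D ∈ gpaths k (m + 1)) :
    wt (insert (k + 1) D) = (m + 1) * wt D := by
  rw [mem_gpaths] at hD
  obtain ⟨hsub, hcard, _⟩ := hD
  have hlt : ∀ b ∈ D, b < k + 1 := by
    intro b hb
    have := hsub hb
    simp only [Finset.mem_Icc] at this
    omega
  have hk1 : k + 1 ∉ D := fun h => by have := hlt _ h; omega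
  have hsort := sort_insert_max hlt hk1
  have hlen : (D.sort (· ≤ ·)).length = D.card := Finset.length_sort _
  have hcardins : (insert (k + 1) D).card = D.card + 1 :=
    Finset.card_insert_of_notMem hk1
  unfold wt
  rw [hcardins, Finset.prod_Icc_succ_top (by omega : 1 ≤ D.card + 1)]
  have hlast : ht (insert (k + 1) D) (D.card + 1) = m + 1 := by
    unfold ht dstep
    rw [hsort, List.getD_append_right _ _ _ _ (by omega), hlen]
    have : D.card + 1 - 1 - D.card = 0 := by omega
    rw [this]
    simp only [List.getD_cons_zero]
    omega
  have hsame : ∀ i ∈ Finset.Icc 1 D.card, ht (insert (k + 1) D) i = ht D i := by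
    intro i hi
    simp only [Finset.mem_Icc] at hi
    unfold ht dstep
    rw [hsort, List.getD_append _ _ _ _ (by omega)]
  rw [Finset.prod_congr rfl hsame, hlast, mul_comm]

lemma sum_wt : ∀ k m, ∑ D ∈ gpaths k m, wt D = W k m := by
  intro k
  induction k with
  | zero =>
    intro m
    match m with
    | 0 =>
      have : gpaths 0 0 = {∅} := by
        ext D
        simp only [mem_gpaths, Finset.mem_singleton]
        constructor
        · rintro ⟨hsub, _, _⟩
          have : D ⊆ ∅ := by simpa using hsub
          exact Finset.subset_empty.mp this
        · rintro rfl
          refine ⟨by simp, by simp, ?_⟩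
          intro j hj
          simp
      rw [this]
      simp [wt, W]
    | m + 1 =>
      have : gpaths 0 (m + 1) = ∅ := by
        rw [Finset.eq_empty_iff_forall_notMem]
        intro D hD
        have := (mem_gpaths.mp hD).2.1
        omega
      rw [this]
      simp [W]
  | succ k ih =>
    intro m
    have hsplit : ∑ D ∈ gpaths (k + 1) m, wt D
        = ∑ D ∈ (gpaths (k + 1) m).filter (fun D => k + 1 ∈ D), wt D
          + ∑ D ∈ (gpaths (k + 1) m).filter (fun D => k + 1 ∉ D), wt D :=
      (Finset.sum_filter_add_sum_filter_not _ _ _).symm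
    have hinj : ∀ D ∈ gpaths k (m + 1), ∀ D' ∈ gpaths k (m + 1),
        insert (k + 1) D = insert (k + 1) D' → D = D' := by
      intro D hD D' hD' h
      have h1 : k + 1 ∉ D := fun hx => by have := (gpaths_mem_le hD) _ hx; omega
      have h2 : k + 1 ∉ D' := fun hx => by have := (gpaths_mem_le hD') _ hx; omega
      rw [← Finset.erase_insert h1, ← Finset.erase_insert h2, h]
    have hdown : ∑ D ∈ (gpaths (k + 1) m).filter (fun D => k + 1 ∈ D), wt D
        = (m + 1) * W k (m + 1) := by
      rw [gpaths_filter_mem, Finset.sum_image hinj]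
      rw [Finset.sum_congr rfl (fun D hD => wt_insert hD), ← Finset.mul_sum, ih]
    rw [hsplit, hdown]
    match m with
    | 0 =>
      rw [gpaths_zero_filter_not_mem]
      show 1 * W k 1 + 0 = W (k + 1) 0
      simp [W]
    | m + 1 =>
      rw [gpaths_filter_not_mem, ih]
      show (m + 2) * W k (m + 2) + W k m = W (k + 1) (m + 1)
      show (m + 2) * W k (m + 2) + W k m = W k m + (m + 2) * W k (m + 2)
      ring

lemma W_closed : ∀ k m, W k m =
    if m ≤ k ∧ (k - m) % 2 = 0 then k.choose m * (k - m - 1)‼ else 0 := by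
  intro k
  induction k with
  | zero =>
    intro m
    match m with
    | 0 => simp [W, Nat.doubleFactorial]
    | m + 1 => simp [W]
  | succ k ih =>
    intro m
    match m with
    | 0 =>
      show W k 1 = _
      rw [ih 1]
      rcases Nat.even_or_odd k with he | ho
      · rw [if_neg, if_neg]
        · rw [Nat.even_iff] at he
          omega
        · rw [Nat.even_iff] at he
          omega
      · rw [Nat.odd_iff] at ho
        rw [if_pos (by omega), if_pos (by omega)]
        rw [Nat.choose_one_right, Nat.choose_zero_right, one_mul]
        have h1 : k + 1 - 0 - 1 = k := by omega
        rw [h1]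
        rcases Nat.lt_or_ge k 2 with h | h
        · interval_cases k
          · omega
          · simp [Nat.doubleFactorial]
        · have h2 : k = (k - 1 - 1) + 2 := by omega
          rw [h2, Nat.doubleFactorial_add_two]
          have h3 : k - 1 - 1 + 2 - 1 - 1 = k - 1 - 1 := by omega
          rw [h3]
    | m + 1 =>
      show W k m + (m + 2) * W k (m + 2) = _
      rw [ih m, ih (m + 2)]
      by_cases h1 : m ≤ k ∧ (k - m) % 2 = 0
      · rcases Nat.eq_or_lt_of_le h1.1 with heq | hlt
        · subst heq
          rw [if_pos (by omega), if_neg (by omega), if_pos (by omega)]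
          simp [Nat.choose_self, Nat.doubleFactorial]
        · have hge : m + 2 ≤ k := by omega
          rw [if_pos (by omega), if_pos (by omega), if_pos (by omega)]
          have hcho : (m + 2) * k.choose (m + 2) = (k - m - 1) * k.choose (m + 1) := by
            have := Nat.choose_succ_right_eq k (m + 1)
            have h2 : k - (m + 1) = k - m - 1 := by omega
            rw [h2] at this
            rw [mul_comm, this, mul_comm]
          have hmul : (k - m - 1)‼ = (k - m - 1) * (k - m - 3)‼ := by
            rcases Nat.eq_or_lt_of_le hge with h2 | h2
            · have h3 : k - m - 1 = 1 := by omega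
              have h4 : k - m - 3 = 0 := by omega
              rw [h3, h4]
              simp [Nat.doubleFactorial]
            · have h3 : k - m - 1 = (k - m - 3) + 2 := by omega
              rw [h3, Nat.doubleFactorial_add_two]
          have hpas : (k + 1).choose (m + 1) = k.choose m + k.choose (m + 1) :=
            Nat.choose_succ_succ k m
          have hd : k + 1 - (m + 1) - 1 = k - m - 1 := by omega
          have hd2 : k - (m + 2) - 1 = k - m - 3 := by omega
          rw [hpas, hd, hd2, hmul]
          have hstep : (m + 2) * (k.choose (m + 2) * (k - m - 3)‼)
              = (k - m - 1) * k.choose (m + 1) * (k - m - 3)‼ := by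
            rw [← hcho]; ring
          rw [hstep]
          ring
      · rw [if_neg (by omega)]
        rcases Nat.lt_or_ge k m with h2 | h2
        · rw [if_neg (by omega), if_neg (by omega)]
          simp
        · have hodd : (k - m) % 2 = 1 := by omega
          rw [if_neg (by omega), if_neg (by omega)]
          simp

end AuxStmt1

/-- `∑_{α ∈ D_{2n}} ∏_{i=1}^n h_i(α) = 1·3·5⋯(2n-1)`. -/
theorem stmt1 (n : ℕ) (hn : 1 ≤ n) :
    ∑ α ∈ dyckPaths (2 * n), ∏ i ∈ Finset.Icc 1 n, ht α i =
      ∏ i ∈ Finset.range n, (2 * i + 1) := by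
  have h0 : dyckPaths (2 * n) = gpaths (2 * n) 0 := by
    ext D
    simp [dyckPaths, gpaths, IsDyck, Finset.mem_filter, Finset.mem_powerset, and_assoc]
  have h1 : ∀ D ∈ gpaths (2 * n) 0, ∏ i ∈ Finset.Icc 1 n, ht D i = wt D := by
    intro D hD
    have hc : D.card = n := by
      have := (mem_gpaths.mp hD).2.1
      omega
    rw [wt, hc]
  rw [h0, Finset.sum_congr rfl h1, sum_wt, W_closed]
  rw [if_pos (by omega)]
  rw [Nat.choose_zero_right, one_mul]
  obtain ⟨s, rfl⟩ : ∃ s, n = s + 1 := ⟨n - 1, by omega⟩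
  have h2 : 2 * (s + 1) - 0 - 1 = 2 * s + 1 := by omega
  rw [h2, Nat.doubleFactorial_eq_prod_odd]
  rw [Finset.prod_range_succ']
  simp [mul_comm]
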